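/- arXiv:2403.08371 — 4 statements merged into one kernel-verified Lean document; each statement's English description precedes it below -/
import Mathlib

section
/- A standard interference function has at most one fixed point: if F : ℝ_{≥0}^M → ℝ_{>0}^M is positive, monotone, and scalable componentwise, and λ = F(λ) and λ' = F(λ') with λ, λ' ≥ 0, then λ = λ'. -/
lemma stmt_5_aux {M : ℕ} (F : (Fin M → ℝ) → (Fin M → ℝ))
    (hmono : ∀ lam lam' : Fin M → ℝ, (∀ i, 0 ≤ lam i) →
      (∀ i, lam i ≤ lam' i) → ∀ i, F lam i ≤ F lam' i)
    (hscale : ∀ (α : ℝ) (lam : Fin M → ℝ), 1 < α → (∀ i, 0 ≤ lam i) →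
      ∀ i, F (α • lam) i < α * F lam i)
    (lam lam' : Fin M → ℝ)
    (hlampos : ∀ i, 0 < lam i) (hlam' : ∀ i, 0 ≤ lam' i)
    (hfix : F lam = lam) (hfix' : F lam' = lam') :
    ∀ i, lam' i ≤ lam i := by
  by_contra h
  push_neg at h
  obtain ⟨j, hj⟩ := h
  have hne : (Finset.univ : Finset (Fin M)).Nonempty := ⟨j, Finset.mem_univ j⟩
  obtain ⟨j₀, _, hj₀⟩ := Finset.exists_max_image Finset.univ
    (fun i => lam' i / lam i) hne
  set α := lam' j₀ / lam j₀ with hα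
  have hαgt : 1 < α := by
    have := hj₀ j (Finset.mem_univ j)
    have h1 : 1 < lam' j / lam j := (one_lt_div (hlampos j)).mpr hj
    linarith
  have hle : ∀ i, lam' i ≤ α * lam i := by
    intro i
    have := hj₀ i (Finset.mem_univ i)
    calc lam' i = (lam' i / lam i) * lam i := (div_mul_cancel₀ _ (hlampos i).ne').symm
    _ ≤ α * lam i := by
        exact mul_le_mul_of_nonneg_right this (hlampos i).le
  have heq : lam' j₀ = α * lam j₀ := by
    rw [hα, div_mul_cancel₀ _ (hlampos j₀).ne']
  have h1 : F lam' j₀ ≤ F (α • lam) j₀ := by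
    apply hmono lam' (α • lam) hlam'
    intro i; simpa using hle i
  have h2 : F (α • lam) j₀ < α * F lam j₀ :=
    hscale α lam hαgt (fun i => (hlampos i).le) j₀
  rw [hfix, hfix'] at *
  linarith [heq, h1, h2]

/-- A standard interference function (positive, monotone, scalable componentwise)
has at most one fixed point. -/
theorem stmt_5 {M : ℕ} (F : (Fin M → ℝ) → (Fin M → ℝ))
    (hpos : ∀ lam : Fin M → ℝ, (∀ i, 0 ≤ lam i) → ∀ i, 0 < F lam i)
    (hmono : ∀ lam lam' : Fin M → ℝ, (∀ i, 0 ≤ lam i) →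
      (∀ i, lam i ≤ lam' i) → ∀ i, F lam i ≤ F lam' i)
    (hscale : ∀ (α : ℝ) (lam : Fin M → ℝ), 1 < α → (∀ i, 0 ≤ lam i) →
      ∀ i, F (α • lam) i < α * F lam i)
    (lam lam' : Fin M → ℝ)
    (hlam : ∀ i, 0 ≤ lam i) (hlam' : ∀ i, 0 ≤ lam' i)
    (hfix : F lam = lam) (hfix' : F lam' = lam') :
    lam = lam' := by
  have hp : ∀ i, 0 < lam i := fun i => hfix ▸ hpos lam hlam i
  have hp' : ∀ i, 0 < lam' i := fun i => hfix' ▸ hpos lam' hlam' i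
  have h1 := stmt_5_aux F hmono hscale lam lam' hp hlam' hfix hfix'
  have h2 := stmt_5_aux F hmono hscale lam' lam hp' hlam hfix' hfix
  funext i
  exact le_antisymm (h2 i) (h1 i)
end

section
/- If a standard interference function F has a fixed point λ*, then the iteration λ^{(q+1)} = F(λ^{(q)}) started from λ^{(0)} = 0 produces a componentwise nondecreasing sequence bounded above by λ*, and hence converges. -/
open Filter Topology

/-- If a standard interference function `F` has a fixed point `λ*`, the iteration
`λ^{(q+1)} = F(λ^{(q)})` started from `0` is componentwise nondecreasing, bounded
above by `λ*`, and hence converges (componentwise). -/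
theorem stmt_6 {M : ℕ} (F : (Fin M → ℝ) → (Fin M → ℝ))
    (hpos : ∀ lam : Fin M → ℝ, (∀ i, 0 ≤ lam i) → ∀ i, 0 < F lam i)
    (hmono : ∀ lam lam' : Fin M → ℝ, (∀ i, 0 ≤ lam i) →
      (∀ i, lam i ≤ lam' i) → ∀ i, F lam i ≤ F lam' i)
    (hscale : ∀ (α : ℝ) (lam : Fin M → ℝ), 1 < α → (∀ i, 0 ≤ lam i) →
      ∀ i, F (α • lam) i < α * F lam i)
    (lamStar : Fin M → ℝ) (hlamStar : ∀ i, 0 ≤ lamStar i)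
    (hfix : F lamStar = lamStar)
    (seq : ℕ → (Fin M → ℝ))
    (hseq0 : seq 0 = 0)
    (hseqS : ∀ q, seq (q + 1) = F (seq q)) :
    (∀ q i, seq q i ≤ seq (q + 1) i) ∧
    (∀ q i, seq q i ≤ lamStar i) ∧
    (∃ L : Fin M → ℝ, ∀ i, Tendsto (fun q => seq q i) atTop (𝓝 (L i))) := by
  have hnn : ∀ q i, 0 ≤ seq q i := by
    intro q
    induction q with
    | zero => intro i; simp [hseq0]
    | succ n ih => intro i; rw [hseqS]; exact (hpos _ ih i).le
  have hmon : ∀ q i, seq q i ≤ seq (q + 1) i := by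
    intro q
    induction q with
    | zero => intro i; rw [hseq0, hseqS, hseq0]; exact (hpos _ (fun _ => le_refl 0) i).le
    | succ n ih =>
      intro i
      rw [hseqS, hseqS (n+1)]
      exact hmono _ _ (hnn n) ih i
  have hbd : ∀ q i, seq q i ≤ lamStar i := by
    intro q
    induction q with
    | zero => intro i; simp [hseq0]; exact hlamStar i
    | succ n ih =>
      intro i
      rw [hseqS]
      calc F (seq n) i ≤ F lamStar i := hmono _ _ (hnn n) ih i
        _ = lamStar i := by rw [hfix]
  refine ⟨hmon, hbd, ?_⟩
  have : ∀ i : Fin M, ∃ l : ℝ, Filter.Tendsto (fun q => seq q i) atTop (𝓝 l) := by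
    intro i
    have hm : Monotone (fun q => seq q i) := monotone_nat_of_le_succ (fun n => hmon n i)
    exact ⟨_, tendsto_atTop_ciSup hm ⟨lamStar i, fun x ⟨q, hq⟩ => hq ▸ hbd q i⟩⟩
  choose L hL using this
  exact ⟨L, hL⟩
end

section
/- For a Hermitian matrix of the form Ω = I + Σ_{j≠m} λ_j g_j g_j^H − (λ_m/γ) g_m g_m^H with all λ_j ≥ 0, γ > 0: Ω is positive semidefinite if and only if (λ_m/γ)·g_m^H (I + Σ_{j≠m} λ_j g_j g_j^H)^{-1} g_m ≤ 1. -/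
open Matrix Finset
open scoped ComplexOrder

private lemma psd_one_dim (N : Matrix (Fin 1) (Fin 1) ℂ) :
    N.PosSemidef ↔ 0 ≤ N 0 0 := by
  constructor
  · intro h
    simpa [dotProduct, mulVec, Fin.sum_univ_one] using (posSemidef_iff_dotProduct_mulVec.mp h).2 (fun _ => 1)
  · intro h
    obtain ⟨hre, him⟩ := Complex.nonneg_iff.mp h
    refine posSemidef_iff_dotProduct_mulVec.mpr ⟨?_, ?_⟩
    · ext i j
      fin_cases i; fin_cases j
      simp only [conjTranspose_apply]
      exact Complex.ext (by simp) (by simp [← him])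
    · intro x
      have : star x ⬝ᵥ N *ᵥ x = N 0 0 * (star (x 0) * x 0) := by
        simp [dotProduct, mulVec, Fin.sum_univ_one]; ring
      rw [this]
      exact mul_nonneg h (star_mul_self_nonneg _)

private lemma smul_vecMulVec {n : ℕ} (v : Fin n → ℂ) (r : ℝ) (hr : 0 ≤ r) :
    r • Matrix.vecMulVec v (star v)
      = Matrix.vecMulVec ((Real.sqrt r : ℂ) • v) (star ((Real.sqrt r : ℂ) • v)) := by
  ext i j
  simp only [Matrix.smul_apply, Matrix.vecMulVec_apply, Pi.star_apply, Pi.smul_apply,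
    smul_eq_mul, star_mul', Complex.star_def, Complex.conj_ofReal]
  have : (Real.sqrt r : ℂ) * (Real.sqrt r : ℂ) = (r : ℂ) := by
    rw [← Complex.ofReal_mul, Real.mul_self_sqrt hr]
  rw [Complex.real_smul]
  ring_nf
  rw [sq, this]
  ring

private lemma psd_vecMulVec {n : ℕ} (v : Fin n → ℂ) :
    (Matrix.vecMulVec v (star v)).PosSemidef := by
  rw [show Matrix.vecMulVec v (star v) = Matrix.replicateCol (Fin 1) v * (Matrix.replicateCol (Fin 1) v)ᴴ from by
    rw [Matrix.conjTranspose_replicateCol, Matrix.vecMulVec_eq (Fin 1)]; rfl]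
  exact Matrix.posSemidef_self_mul_conjTranspose _

/-- Rank-one-update PSD criterion for
`Ω = I + Σ_{j≠m} λ_j g_j g_jᴴ − (λ_m/γ) g_m g_mᴴ`:
`Ω ⪰ 0` iff `(λ_m/γ)·g_mᴴ (I + Σ_{j≠m} λ_j g_j g_jᴴ)⁻¹ g_m ≤ 1`. -/
theorem stmt_7 {n M : ℕ} (m : Fin M) (g : Fin M → Fin n → ℂ)
    (lam : Fin M → ℝ) (hlam : ∀ j, 0 ≤ lam j) (γ : ℝ) (hγ : 0 < γ) :
    (1 + ∑ j ∈ Finset.univ.erase m, lam j • Matrix.vecMulVec (g j) (star (g j))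
        - (lam m / γ) • Matrix.vecMulVec (g m) (star (g m))).PosSemidef ↔
    (lam m / γ) *
      (star (g m) ⬝ᵥ
        ((1 + ∑ j ∈ Finset.univ.erase m,
            lam j • Matrix.vecMulVec (g j) (star (g j)))⁻¹ *ᵥ g m)).re ≤ 1 := by
  set c : ℝ := lam m / γ with hc_def
  have hc : 0 ≤ c := div_nonneg (hlam m) hγ.le
  set A : Matrix (Fin n) (Fin n) ℂ :=
    1 + ∑ j ∈ Finset.univ.erase m, lam j • Matrix.vecMulVec (g j) (star (g j)) with hA_def
  have hA : A.PosDef := by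
    refine Matrix.PosDef.add_posSemidef Matrix.PosDef.one ?_
    refine Finset.sum_induction _ _ (fun a b ha hb => ha.add hb) Matrix.PosSemidef.zero ?_
    intro j _
    rw [smul_vecMulVec _ _ (hlam j)]
    exact psd_vecMulVec _
  haveI : Invertible A := hA.isUnit.invertible
  set v : Fin n → ℂ := (Real.sqrt c : ℂ) • g m with hv_def
  set B : Matrix (Fin n) (Fin 1) ℂ := Matrix.replicateCol (Fin 1) v with hB_def
  have hBB : c • Matrix.vecMulVec (g m) (star (g m))
      = B * (1 : Matrix (Fin 1) (Fin 1) ℂ)⁻¹ * Bᴴ := by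
    rw [inv_one, Matrix.mul_one, hB_def, Matrix.conjTranspose_replicateCol,
      smul_vecMulVec _ _ hc, Matrix.vecMulVec_eq (Fin 1)]; rfl
  haveI : Invertible (1 : Matrix (Fin 1) (Fin 1) ℂ) := invertibleOne
  have key : (A - B * (1 : Matrix (Fin 1) (Fin 1) ℂ)⁻¹ * Bᴴ).PosSemidef ↔
      ((1 : Matrix (Fin 1) (Fin 1) ℂ) - Bᴴ * A⁻¹ * B).PosSemidef := by
    rw [← Matrix.PosDef.fromBlocks₂₂ A B Matrix.PosDef.one,
      Matrix.PosDef.fromBlocks₁₁ B _ hA]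
  have hz : (0 : ℂ) ≤ star (g m) ⬝ᵥ A⁻¹ *ᵥ g m := (posSemidef_iff_dotProduct_mulVec.mp hA.inv.posSemidef).2 (g m)
  obtain ⟨hzre, hzim⟩ := Complex.nonneg_iff.mp hz
  have hentry : ((1 : Matrix (Fin 1) (Fin 1) ℂ) - Bᴴ * A⁻¹ * B) 0 0
      = 1 - (c : ℂ) * (star (g m) ⬝ᵥ A⁻¹ *ᵥ g m) := by
    have hvv : star v ⬝ᵥ A⁻¹ *ᵥ v = (c : ℂ) * (star (g m) ⬝ᵥ A⁻¹ *ᵥ g m) := by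
      rw [hv_def]
      have : star ((Real.sqrt c : ℂ) • g m) = (Real.sqrt c : ℂ) • star (g m) := by
        ext i; simp [Complex.conj_ofReal]
      rw [this, Matrix.mulVec_smul, smul_dotProduct, dotProduct_smul,
        smul_smul, smul_eq_mul, ← Complex.ofReal_mul, Real.mul_self_sqrt hc]
    rw [← hvv]
    simp only [Matrix.sub_apply, Matrix.one_apply_eq, Matrix.mul_apply,
      Matrix.conjTranspose_apply, Matrix.replicateCol_apply, dotProduct, Matrix.mulVec, dotProduct,
      Fin.sum_univ_one, Pi.star_apply, Finset.sum_mul, Finset.mul_sum]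
    congr 1
    rw [Finset.sum_comm]
    refine Finset.sum_congr rfl fun i _ => Finset.sum_congr rfl fun k _ => by
      simp only [hB_def, Matrix.replicateCol_apply, hv_def, hc_def, div_eq_mul_inv]; ring
  rw [sub_eq_add_neg, ← sub_eq_add_neg, hBB, key, psd_one_dim, hentry]
  rw [Complex.nonneg_iff]
  constructor
  · rintro ⟨h1, -⟩
    simpa using h1
  · intro h1
    constructor
    · simpa using h1
    · simp [hzim.symm]
end

section
/- For A Hermitian positive definite and v ∈ ℂ^n, the matrix A − v v^H is positive semidefinite but not positive definite (i.e., singular and PSD) if and only if v^H A^{-1} v = 1. -/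
open Matrix
open scoped ComplexOrder

lemma vecMulVec_mulVec' {n : ℕ} (v : Fin n → ℂ) (x : Fin n → ℂ) :
    Matrix.vecMulVec v (star v) *ᵥ x = (star v ⬝ᵥ x) • v := by
  ext i
  simp [Matrix.mulVec, Matrix.vecMulVec_apply, dotProduct, Finset.sum_mul,
    Pi.smul_apply, smul_eq_mul]
  exact Finset.sum_congr rfl fun j _ => by ring

lemma isHermitian_vecMulVec' {n : ℕ} (v : Fin n → ℂ) :
    (Matrix.vecMulVec v (star v)).IsHermitian := by
  ext i j
  simp [Matrix.conjTranspose_apply, Matrix.vecMulVec_apply, mul_comm]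

/-- For Hermitian positive definite `A` and `v ∈ ℂⁿ`, `A − v vᴴ` is positive
semidefinite but not positive definite iff `vᴴ A⁻¹ v = 1`. -/
theorem stmt_8 {n : ℕ} (A : Matrix (Fin n) (Fin n) ℂ) (hA : A.PosDef)
    (v : Fin n → ℂ) :
    ((A - Matrix.vecMulVec v (star v)).PosSemidef ∧
      ¬ (A - Matrix.vecMulVec v (star v)).PosDef) ↔
    (star v ⬝ᵥ (A⁻¹ *ᵥ v)).re = 1 := by
  have hdet : IsUnit A.det := A.isUnit_iff_isUnit_det.mp hA.isUnit
  have hAinv : A⁻¹ * A = 1 := Matrix.nonsing_inv_mul A hdet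
  have hinvA : A * A⁻¹ = 1 := Matrix.mul_nonsing_inv A hdet
  set w : Fin n → ℂ := A⁻¹ *ᵥ v with hw
  set c : ℂ := star v ⬝ᵥ w with hc
  have hAw : A *ᵥ w = v := by
    rw [hw, Matrix.mulVec_mulVec, hinvA, Matrix.one_mulVec]
  -- star w ᵥ* A = star v
  have hstarw : star w ᵥ* A = star v := by
    rw [hw, Matrix.star_mulVec, hA.isHermitian.inv.eq, Matrix.vecMul_vecMul, hAinv,
      Matrix.vecMul_one]
  -- key: star w ⬝ᵥ A *ᵥ x = star v ⬝ᵥ x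
  have hkey : ∀ x : Fin n → ℂ, star w ⬝ᵥ A *ᵥ x = star v ⬝ᵥ x := fun x => by
    rw [Matrix.dotProduct_mulVec, hstarw]
  -- c is nonneg (in particular real)
  have hc_nonneg : (0:ℂ) ≤ c := by
    have := (hA.inv).posSemidef.dotProduct_mulVec_nonneg v
    rwa [← hc] at this
  have hc_im : c.im = 0 := by
    rw [Complex.le_def] at hc_nonneg
    exact hc_nonneg.2.symm
  -- star x ⬝ᵥ v = star (star v ⬝ᵥ x)
  have hconj : ∀ x : Fin n → ℂ, star x ⬝ᵥ v = star (star v ⬝ᵥ x) := fun x => by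
    simp [dotProduct, mul_comm]
  have hcw : star w ⬝ᵥ v = star c := by
    rw [hconj w, ← hc]
  constructor
  · rintro ⟨hpsd, hnpd⟩
    -- v ≠ 0, else A - 0 = A is PosDef
    have hv : v ≠ 0 := by
      rintro rfl
      apply hnpd
      have h0 : Matrix.vecMulVec (0 : Fin n → ℂ) (star (0 : Fin n → ℂ)) = 0 := by
        ext i j; simp [Matrix.vecMulVec_apply]
      rw [h0, sub_zero]
      exact hA
    -- get x ≠ 0 with quadratic form zero
    have : ∃ x : Fin n → ℂ, x ≠ 0 ∧ ¬ (0 < star x ⬝ᵥ (A - Matrix.vecMulVec v (star v)) *ᵥ x) := by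
      by_contra h
      push_neg at h
      exact hnpd (.of_dotProduct_mulVec_pos hpsd.1 h)
    obtain ⟨x, hx0, hxq⟩ := this
    have hq0 : star x ⬝ᵥ (A - Matrix.vecMulVec v (star v)) *ᵥ x = 0 := by
      have hle := hpsd.dotProduct_mulVec_nonneg x
      rcases lt_or_eq_of_le hle with h | h
      · exact absurd h hxq
      · exact h.symm
    have hMx : (A - Matrix.vecMulVec v (star v)) *ᵥ x = 0 :=
      (hpsd.dotProduct_mulVec_zero_iff x).mp hq0
    have hAx : A *ᵥ x = (star v ⬝ᵥ x) • v := by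
      have := hMx
      rw [Matrix.sub_mulVec, vecMulVec_mulVec', sub_eq_zero] at this
      exact this
    set t : ℂ := star v ⬝ᵥ x with ht
    have hxw : x = t • w := by
      have : A⁻¹ *ᵥ (A *ᵥ x) = A⁻¹ *ᵥ (t • v) := by rw [hAx]
      rwa [Matrix.mulVec_mulVec, hAinv, Matrix.one_mulVec, Matrix.mulVec_smul, ← hw] at this
    have htc : t = t * c := by
      conv_lhs => rw [ht, hxw]
      rw [dotProduct_smul, smul_eq_mul, hc]
    have htne : t ≠ 0 := by
      intro h0
      rw [h0, zero_smul] at hxw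
      exact hx0 hxw
    have h2 : t * (c - 1) = 0 := by linear_combination -htc
    rcases mul_eq_zero.mp h2 with h | h
    · exact absurd h htne
    · rw [sub_eq_zero] at h
      rw [h]
      simp
  · intro hre
    have hc1 : c = 1 := Complex.ext (by simpa [hc] using hre) hc_im
    have hv : v ≠ 0 := by
      rintro rfl
      simp [hc, hw] at hc1
    have hwne : w ≠ 0 := by
      intro h
      rw [← hAw, h, Matrix.mulVec_zero] at hv
      exact hv rfl
    -- quadratic form identity: q x = star y ⬝ᵥ A *ᵥ y with y = x - t • w
    have hq : ∀ x : Fin n → ℂ,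
        star x ⬝ᵥ (A - Matrix.vecMulVec v (star v)) *ᵥ x
          = star (x - (star v ⬝ᵥ x) • w) ⬝ᵥ A *ᵥ (x - (star v ⬝ᵥ x) • w) := by
      intro x
      set t : ℂ := star v ⬝ᵥ x with ht
      have e1 : star (x - t • w) = star x - star t • star w := by
        ext i; simp [Pi.smul_apply, smul_eq_mul]
      rw [e1, Matrix.mulVec_sub, Matrix.mulVec_smul, hAw, Matrix.sub_mulVec,
        vecMulVec_mulVec', ← ht]
      simp only [dotProduct_sub, sub_dotProduct, dotProduct_smul,
        smul_dotProduct, smul_eq_mul]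
      rw [hkey x, hcw, hconj x, ← ht, hc1]
      simp only [star_one]
      ring
    have hherm : (A - Matrix.vecMulVec v (star v)).IsHermitian :=
      hA.isHermitian.sub (isHermitian_vecMulVec' v)
    constructor
    · refine .of_dotProduct_mulVec_nonneg hherm fun x => ?_
      rw [hq x]
      exact hA.posSemidef.dotProduct_mulVec_nonneg _
    · intro hpd
      have := hpd.dotProduct_mulVec_pos hwne
      rw [hq w] at this
      have hww : w - (star v ⬝ᵥ w) • w = 0 := by
        rw [← hc, hc1, one_smul, sub_self]
      rw [hww] at this
      simp at this
end
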